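/- Let a₁, a₂, a₄, a₅ ∈ ℝ, a₃ > 0, and define f(x,y) = a₁ + a₂|y|^{4/3} − a₃x³ for x,y ∈ ℝ. Set a₆ = sup_{u≥0}(8u^{2/3} − 0.5a₃u²). Then for all x, x̄, y, ȳ ∈ ℝ: (x − x̄)(f(x,y) − f(x̄,ȳ)) ≤ max(a₆, a₂²)·(|x−x̄|² + |y−ȳ|²) − 0.5a₃|x−x̄|²(x² + x̄²) + 0.25a₃|y−ȳ|²(y² + ȳ²). -/
import Mathlib

private lemma cube_root_cube (u : ℝ) (hu : 0 ≤ u) : (u ^ ((1:ℝ)/3)) ^ 3 = u := by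
  rw [← Real.rpow_natCast (u ^ ((1:ℝ)/3)) 3, ← Real.rpow_mul hu]
  norm_num

private lemma cube_root_four (u : ℝ) (hu : 0 ≤ u) : (u ^ ((1:ℝ)/3)) ^ 4 = u ^ ((4:ℝ)/3) := by
  rw [← Real.rpow_natCast (u ^ ((1:ℝ)/3)) 4, ← Real.rpow_mul hu]
  norm_num

private lemma cube_root_sq (u : ℝ) (hu : 0 ≤ u) : (u ^ ((1:ℝ)/3)) ^ 2 = u ^ ((2:ℝ)/3) := by
  rw [← Real.rpow_natCast (u ^ ((1:ℝ)/3)) 2, ← Real.rpow_mul hu]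
  norm_num

private lemma bdd_S (a₃ : ℝ) (h₃ : 0 < a₃) :
    BddAbove {v : ℝ | ∃ u : ℝ, 0 ≤ u ∧ v = 8 * u ^ ((2:ℝ)/3) - 0.5 * a₃ * u ^ 2} := by
  refine ⟨8 * Real.sqrt (16 / a₃), ?_⟩
  rintro v ⟨u, hu, rfl⟩
  set t := u ^ ((2:ℝ)/3) with ht
  have ht0 : 0 ≤ t := Real.rpow_nonneg hu _
  have ht3 : t ^ 3 = u ^ 2 := by
    rw [ht, ← Real.rpow_natCast (u ^ ((2:ℝ)/3)) 3, ← Real.rpow_mul hu, ← Real.rpow_natCast u 2]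
    norm_num
  set t₀ := Real.sqrt (16 / a₃) with ht₀
  have ht₀0 : 0 ≤ t₀ := Real.sqrt_nonneg _
  have ht₀2 : t₀ ^ 2 = 16 / a₃ := Real.sq_sqrt (by positivity)
  have ha : a₃ * t₀ ^ 2 = 16 := by field_simp at ht₀2 ⊢; linarith
  have key : 0 ≤ t₀ ^ 3 + t ^ 3 - t₀ ^ 2 * t := by
    nlinarith [mul_nonneg (sq_nonneg (t - t₀)) (add_nonneg ht0 ht₀0),
      mul_nonneg (mul_nonneg ht0 ht0) ht₀0]
  rw [← ht3]
  have h8 : (8:ℝ) = 0.5 * (a₃ * t₀ ^ 2) := by rw [ha]; norm_num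
  nlinarith [mul_nonneg h₃.le key]

/-- lower bound on the sup: for every `m ≥ 0`, `2 m^{2/3} - 0.25 a₃ m² ≤ sSup S`. -/
private lemma sup_lb (a₃ : ℝ) (h₃ : 0 < a₃) (m : ℝ) (hm : 0 ≤ m) :
    2 * m ^ ((2:ℝ)/3) - 0.25 * a₃ * m ^ 2
      ≤ sSup {v : ℝ | ∃ u : ℝ, 0 ≤ u ∧ v = 8 * u ^ ((2:ℝ)/3) - 0.5 * a₃ * u ^ 2} := by
  have hmem : 8 * (m/2) ^ ((2:ℝ)/3) - 0.5 * a₃ * (m/2) ^ 2 ∈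
      {v : ℝ | ∃ u : ℝ, 0 ≤ u ∧ v = 8 * u ^ ((2:ℝ)/3) - 0.5 * a₃ * u ^ 2} :=
    ⟨m/2, by positivity, rfl⟩
  have hle := le_csSup (bdd_S a₃ h₃) hmem
  refine le_trans ?_ hle
  have hdiv : (m/2) ^ ((2:ℝ)/3) = m ^ ((2:ℝ)/3) / (2:ℝ) ^ ((2:ℝ)/3) :=
    Real.div_rpow hm (by norm_num) _
  have h2pos : (0:ℝ) < (2:ℝ) ^ ((2:ℝ)/3) := Real.rpow_pos_of_pos (by norm_num) _
  have h2le : (2:ℝ) ^ ((2:ℝ)/3) ≤ 2 := by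
    have := Real.rpow_le_rpow_of_exponent_le (by norm_num : (1:ℝ) ≤ 2)
      (by norm_num : (2:ℝ)/3 ≤ 1)
    simpa using this
  have hmn : 0 ≤ m ^ ((2:ℝ)/3) := Real.rpow_nonneg hm _
  have h1 : 2 * m ^ ((2:ℝ)/3) ≤ 8 * (m/2) ^ ((2:ℝ)/3) := by
    rw [hdiv, ← mul_div_assoc, le_div_iff₀ h2pos]
    nlinarith [mul_nonneg hmn (by linarith : (0:ℝ) ≤ 2 - (2:ℝ) ^ ((2:ℝ)/3))]
  nlinarith [h1, sq_nonneg m, h₃.le]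

/-- `|t⁴ - s⁴| ≤ (t + s) * |t³ - s³|` for `t, s ≥ 0`. -/
private lemma abs_pow4_sub (t s : ℝ) (ht : 0 ≤ t) (hs : 0 ≤ s) :
    |t ^ 4 - s ^ 4| ≤ (t + s) * |t ^ 3 - s ^ 3| := by
  rcases le_total s t with h | h
  · have h4 : s ^ 4 ≤ t ^ 4 := pow_le_pow_left₀ hs h 4
    have h3 : s ^ 3 ≤ t ^ 3 := pow_le_pow_left₀ hs h 3
    rw [abs_of_nonneg (by linarith), abs_of_nonneg (by linarith)]
    nlinarith [mul_nonneg (mul_nonneg (mul_nonneg ht hs) (sub_nonneg.2 h))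
      (add_nonneg ht hs)]
  · have h4 : t ^ 4 ≤ s ^ 4 := pow_le_pow_left₀ ht h 4
    have h3 : t ^ 3 ≤ s ^ 3 := pow_le_pow_left₀ ht h 3
    rw [abs_of_nonpos (by linarith), abs_of_nonpos (by linarith)]
    nlinarith [mul_nonneg (mul_nonneg (mul_nonneg ht hs) (sub_nonneg.2 h))
      (add_nonneg ht hs)]


private lemma cube_est (a₃ x xb : ℝ) (h₃ : 0 < a₃) :
    (x - xb) * (- a₃ * (x ^ 3 - xb ^ 3)) ≤ - (0.5 * a₃ * (x - xb) ^ 2 * (x ^ 2 + xb ^ 2)) := by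
  nlinarith [mul_nonneg (mul_nonneg h₃.le (sq_nonneg (x - xb))) (sq_nonneg (x + xb))]

private lemma max_sq_le (u v : ℝ) : (max u v) ^ 2 ≤ u ^ 2 + v ^ 2 := by
  rcases max_choice u v with h | h <;> rw [h] <;> nlinarith [sq_nonneg u, sq_nonneg v]

private lemma young_est (a p r q : ℝ) :
    p * (a * (2 * r * q)) ≤ 0.5 * a ^ 2 * p ^ 2 + 2 * r ^ 2 * q ^ 2 := by
  nlinarith [sq_nonneg (a * p - 2 * r * q)]

private lemma scale_est (c d e f : ℝ) (h : c ≤ d + e) (hf : 0 ≤ f) :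
    c * f ≤ d * f + e * f := by
  nlinarith [mul_le_mul_of_nonneg_right h hf]

private lemma coeff_est (c M p : ℝ) (h : c ≤ M) : c * p ^ 2 ≤ M * p ^ 2 :=
  mul_le_mul_of_nonneg_right h (sq_nonneg p)

theorem stmt_11 (a₁ a₂ a₃ a₆ : ℝ) (h₃ : 0 < a₃)
    (ha₆ : a₆ = sSup {v : ℝ | ∃ u : ℝ, 0 ≤ u ∧ v = 8 * u ^ ((2:ℝ)/3) - 0.5 * a₃ * u ^ 2}) :
    ∀ x xb y yb : ℝ,
      (x - xb) * ((a₁ + a₂ * |y| ^ ((4:ℝ)/3) - a₃ * x ^ 3)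
          - (a₁ + a₂ * |yb| ^ ((4:ℝ)/3) - a₃ * xb ^ 3))
        ≤ (max a₆ (a₂ ^ 2)) * (|x - xb| ^ 2 + |y - yb| ^ 2)
          - 0.5 * a₃ * |x - xb| ^ 2 * (x ^ 2 + xb ^ 2)
          + 0.25 * a₃ * |y - yb| ^ 2 * (y ^ 2 + yb ^ 2) := by
  intro x xb y yb
  set M := max a₆ (a₂ ^ 2) with hM
  have hMa₆ : a₆ ≤ M := le_max_left _ _
  have hMa₂ : a₂ ^ 2 ≤ M := le_max_right _ _
  set p := |x - xb| with hp
  set q := |y - yb| with hq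
  have hp0 : 0 ≤ p := abs_nonneg _
  have hq0 : 0 ≤ q := abs_nonneg _
  have hpsq : p ^ 2 = (x - xb) ^ 2 := sq_abs _
  have hqsq : q ^ 2 = (y - yb) ^ 2 := sq_abs _
  -- cubic term
  have hcube : (x - xb) * (- a₃ * (x ^ 3 - xb ^ 3))
      ≤ - (0.5 * a₃ * p ^ 2 * (x ^ 2 + xb ^ 2)) := by
    rw [hpsq]
    exact cube_est a₃ x xb h₃
  -- rpow term
  set u := |y| with hu
  set v := |yb| with hv
  have hu0 : 0 ≤ u := abs_nonneg _
  have hv0 : 0 ≤ v := abs_nonneg _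
  set m := max u v with hm
  have hm0 : 0 ≤ m := le_trans hu0 (le_max_left _ _)
  set t := u ^ ((1:ℝ)/3) with htdef
  set s := v ^ ((1:ℝ)/3) with hsdef
  set r := m ^ ((1:ℝ)/3) with hrdef
  have ht0 : 0 ≤ t := Real.rpow_nonneg hu0 _
  have hs0 : 0 ≤ s := Real.rpow_nonneg hv0 _
  have hr0 : 0 ≤ r := Real.rpow_nonneg hm0 _
  have htr : t ≤ r := Real.rpow_le_rpow hu0 (le_max_left _ _) (by norm_num)
  have hsr : s ≤ r := Real.rpow_le_rpow hv0 (le_max_right _ _) (by norm_num)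
  have ht3 : t ^ 3 = u := cube_root_cube u hu0
  have hs3 : s ^ 3 = v := cube_root_cube v hv0
  have ht4 : t ^ 4 = u ^ ((4:ℝ)/3) := cube_root_four u hu0
  have hs4 : s ^ 4 = v ^ ((4:ℝ)/3) := cube_root_four v hv0
  have hr2 : r ^ 2 = m ^ ((2:ℝ)/3) := cube_root_sq m hm0
  -- |u^{4/3} - v^{4/3}| ≤ 2 r q
  have hDelta : |u ^ ((4:ℝ)/3) - v ^ ((4:ℝ)/3)| ≤ 2 * r * q := by
    rw [← ht4, ← hs4]
    calc |t ^ 4 - s ^ 4| ≤ (t + s) * |t ^ 3 - s ^ 3| := abs_pow4_sub t s ht0 hs0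
      _ ≤ (2 * r) * q := by
          have h1 : |t ^ 3 - s ^ 3| ≤ q := by
            rw [ht3, hs3, hu, hv, hq]
            exact abs_abs_sub_abs_le_abs_sub y yb
          have h2 : t + s ≤ 2 * r := by linarith
          have := mul_le_mul h2 h1 (abs_nonneg _) (by linarith)
          linarith
      _ = 2 * r * q := by ring
  -- m² ≤ y² + yb²
  have hmsq : m ^ 2 ≤ y ^ 2 + yb ^ 2 := by
    have key : m ^ 2 ≤ u ^ 2 + v ^ 2 := by rw [hm]; exact max_sq_le u v
    have e1 : u ^ 2 = y ^ 2 := by rw [hu]; exact sq_abs y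
    have e2 : v ^ 2 = yb ^ 2 := by rw [hv]; exact sq_abs yb
    linarith
  -- sup bound : 2 r² ≤ a₆ + 0.25 a₃ m²
  have hsup : 2 * r ^ 2 ≤ a₆ + 0.25 * a₃ * m ^ 2 := by
    rw [hr2, ha₆]
    have := sup_lb a₃ h₃ m hm0
    linarith
  -- the coupling term
  have hcouple : (x - xb) * (a₂ * (u ^ ((4:ℝ)/3) - v ^ ((4:ℝ)/3)))
      ≤ M * (p ^ 2 + q ^ 2) + 0.25 * a₃ * q ^ 2 * (y ^ 2 + yb ^ 2) := by
    have habs : (x - xb) * (a₂ * (u ^ ((4:ℝ)/3) - v ^ ((4:ℝ)/3)))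
        ≤ p * (|a₂| * |u ^ ((4:ℝ)/3) - v ^ ((4:ℝ)/3)|) := by
      calc (x - xb) * (a₂ * (u ^ ((4:ℝ)/3) - v ^ ((4:ℝ)/3)))
          ≤ |(x - xb) * (a₂ * (u ^ ((4:ℝ)/3) - v ^ ((4:ℝ)/3)))| := le_abs_self _
        _ = p * (|a₂| * |u ^ ((4:ℝ)/3) - v ^ ((4:ℝ)/3)|) := by
            rw [abs_mul, abs_mul]
    have h1 : p * (|a₂| * |u ^ ((4:ℝ)/3) - v ^ ((4:ℝ)/3)|) ≤ p * (|a₂| * (2 * r * q)) := by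
      apply mul_le_mul_of_nonneg_left _ hp0
      exact mul_le_mul_of_nonneg_left hDelta (abs_nonneg _)
    have h2 : p * (|a₂| * (2 * r * q)) ≤ 0.5 * a₂ ^ 2 * p ^ 2 + 2 * r ^ 2 * q ^ 2 := by
      have := young_est |a₂| p r q
      rwa [sq_abs a₂] at this
    have h3 : 2 * r ^ 2 * q ^ 2 ≤ a₆ * q ^ 2 + 0.25 * a₃ * q ^ 2 * m ^ 2 := by
      have := scale_est (2 * r ^ 2) a₆ (0.25 * a₃ * m ^ 2) (q ^ 2) hsup (sq_nonneg q)
      linarith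
    have h4 : 0.25 * a₃ * q ^ 2 * m ^ 2 ≤ 0.25 * a₃ * q ^ 2 * (y ^ 2 + yb ^ 2) := by
      apply mul_le_mul_of_nonneg_left hmsq
      positivity
    have h5 : 0.5 * a₂ ^ 2 * p ^ 2 ≤ M * p ^ 2 :=
      coeff_est _ _ _ (by linarith [sq_nonneg a₂, hMa₂])
    have h6 : a₆ * q ^ 2 ≤ M * q ^ 2 := coeff_est _ _ _ hMa₆
    linarith
  linarith [hcouple, hcube]
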